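/- In so(n) (n ≥ 4) with k = span{e_{ij} : 3 ≤ i < j ≤ n}, m₁ = span{e₁₂}, m₂ = span{e_{1j} : 3 ≤ j ≤ n}, m₃ = span{e_{2j} : 3 ≤ j ≤ n}, one has so(n) = k ⊕ m₁ ⊕ m₂ ⊕ m₃ and [m₁, m₁] = 0 ⊆ k, [m₂, m₂] ⊆ k, [m₃, m₃] ⊆ k, [m₂, m₃] ⊆ k ⊕ m₁, [m₁, m₂] ⊆ m₃, [m₁, m₃] ⊆ m₂. -/

import Mathlib

open Matrix

/-- `e a b = E a b - E b a` in so(n). -/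
def eSo (n : ℕ) (a b : Fin n) : Matrix (Fin n) (Fin n) ℝ :=
  Matrix.single a b 1 - Matrix.single b a 1

/-- `so(n)`: the real skew-symmetric `n × n` matrices, as a submodule. -/
def soN (n : ℕ) : Submodule ℝ (Matrix (Fin n) (Fin n) ℝ) where
  carrier := {A | Aᵀ = -A}
  add_mem' := by
    intro A B hA hB
    simp only [Set.mem_setOf_eq] at *
    rw [Matrix.transpose_add, hA, hB, neg_add]
  zero_mem' := by simp
  smul_mem' := by
    intro c A hA
    simp only [Set.mem_setOf_eq] at *
    rw [Matrix.transpose_smul, hA, smul_neg]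

section Aux

lemma aux_stdT {n : ℕ} (a b : Fin n) : (Matrix.single a b (1:ℝ))ᵀ = Matrix.single b a 1 := by
  ext i j; simp [Matrix.transpose_apply, Matrix.single, and_comm]

lemma aux_eSo_transpose {n : ℕ} (a b : Fin n) : (eSo n a b)ᵀ = -(eSo n a b) := by
  simp [eSo, Matrix.transpose_sub, aux_stdT, neg_sub]

lemma aux_eSo_antisymm {n : ℕ} (a b : Fin n) : eSo n b a = -eSo n a b := by
  simp [eSo, neg_sub]

lemma aux_eSo_self {n : ℕ} (a : Fin n) : eSo n a a = 0 := by simp [eSo]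

lemma aux_stdMul {n : ℕ} (a b c d : Fin n) :
    Matrix.single a b (1:ℝ) * Matrix.single c d 1 =
      if b = c then Matrix.single a d 1 else 0 := by
  split_ifs with h
  · subst h; simpa using Matrix.single_mul_single_same (c := (1:ℝ)) a b d 1
  · exact Matrix.single_mul_single_of_ne (c := (1:ℝ)) a b c h 1

lemma aux_lie_eSo {n : ℕ} (a b c d : Fin n) :
    ⁅eSo n a b, eSo n c d⁆ =
      (if b = c then eSo n a d else 0) + (if a = d then eSo n b c else 0)
        - (if b = d then eSo n a c else 0) - (if a = c then eSo n b d else 0) := by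
  rw [Ring.lie_def]
  simp only [eSo, sub_mul, mul_sub, aux_stdMul]
  by_cases h1 : b = c <;> by_cases h2 : a = d <;> by_cases h3 : b = d <;> by_cases h4 : a = c <;>
    simp_all [eq_comm] <;> abel

/-- matrices supported on a set of index pairs -/
def suppM (n : ℕ) (S : Set (Fin n × Fin n)) : Submodule ℝ (Matrix (Fin n) (Fin n) ℝ) where
  carrier := {A | ∀ p : Fin n × Fin n, p ∉ S → A p.1 p.2 = 0}
  add_mem' := by intro A B hA hB p hp; simp [Matrix.add_apply, hA p hp, hB p hp]
  zero_mem' := by intro p _; rfl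
  smul_mem' := by intro c A hA p hp; simp [hA p hp]

lemma aux_suppM_mono {n : ℕ} {S T : Set (Fin n × Fin n)} (h : S ⊆ T) : suppM n S ≤ suppM n T :=
  fun _ hA p hp => hA p (fun hs => hp (h hs))

lemma aux_eSo_mem_suppM {n : ℕ} {S : Set (Fin n × Fin n)} {a b : Fin n}
    (h1 : (a, b) ∈ S) (h2 : (b, a) ∈ S) : eSo n a b ∈ suppM n S := by
  intro p hp
  obtain ⟨p1, p2⟩ := p
  have e1 : ¬(a = p1 ∧ b = p2) := by rintro ⟨rfl, rfl⟩; exact hp h1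
  have e2 : ¬(b = p1 ∧ a = p2) := by rintro ⟨rfl, rfl⟩; exact hp h2
  simp [eSo, Matrix.sub_apply, e1, e2]

lemma aux_suppM_indep {n : ℕ} (σ : Fin 4 → Set (Fin n × Fin n))
    (hdisj : ∀ i j, i ≠ j → ∀ p, p ∈ σ i → p ∈ σ j → False) :
    iSupIndep (fun t => suppM n (σ t)) := by
  rw [iSupIndep_def]
  intro i
  rw [disjoint_iff_inf_le]
  intro x hx
  rw [Submodule.mem_inf] at hx
  obtain ⟨hx1, hx2⟩ := hx
  have hle : (⨆ j, ⨆ _ : j ≠ i, (fun t => suppM n (σ t)) j) ≤ suppM n (σ i)ᶜ := by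
    refine iSup_le fun j => iSup_le fun hj => aux_suppM_mono fun p hp hpc => hdisj j i hj p hp hpc
  have hx2' := hle hx2
  rw [Submodule.mem_bot]
  ext p q
  by_cases hp : (p, q) ∈ σ i
  · exact hx2' (p, q) (fun hc => hc hp)
  · exact hx1 (p, q) hp

lemma aux_span_lie {n : ℕ} {S T : Set (Matrix (Fin n) (Fin n) ℝ)}
    {U : Submodule ℝ (Matrix (Fin n) (Fin n) ℝ)}
    (h : ∀ x ∈ S, ∀ y ∈ T, ⁅x, y⁆ ∈ U) :
    ∀ x ∈ Submodule.span ℝ S, ∀ y ∈ Submodule.span ℝ T, ⁅x, y⁆ ∈ U := by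
  have key : ∀ z ∈ S, ∀ y ∈ Submodule.span ℝ T, ⁅z, y⁆ ∈ U := by
    intro z hz y hy
    induction hy using Submodule.span_induction with
    | mem w hw => exact h z hz w hw
    | zero => simp [Ring.lie_def, U.zero_mem]
    | add a b _ _ ha hb => rw [Ring.lie_def] at ha hb ⊢; convert U.add_mem ha hb using 1; noncomm_ring
    | smul c a _ ha => rw [Ring.lie_def] at ha ⊢; convert U.smul_mem c ha using 1; rw [smul_sub, mul_smul_comm, smul_mul_assoc]
  intro x hx y hy
  induction hx using Submodule.span_induction with
  | mem w hw => exact key w hw y hy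
  | zero => simp [Ring.lie_def, U.zero_mem]
  | add a b _ _ ha hb => rw [Ring.lie_def] at ha hb ⊢; convert U.add_mem ha hb using 1; noncomm_ring
  | smul c a _ ha => rw [Ring.lie_def] at ha ⊢; convert U.smul_mem c ha using 1; rw [smul_sub, mul_smul_comm, smul_mul_assoc]

lemma aux_skew_eq_sum {n : ℕ} (A : Matrix (Fin n) (Fin n) ℝ) (hA : Aᵀ = -A) :
    A = (2⁻¹ : ℝ) • ∑ i : Fin n, ∑ j : Fin n, A i j • eSo n i j := by
  have h1 : ∑ i : Fin n, ∑ j : Fin n, A i j • (Matrix.single i j (1:ℝ)) = A := by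
    conv_rhs => rw [Matrix.matrix_eq_sum_single A]
    simp [Matrix.smul_single]
  have h2 : ∑ i : Fin n, ∑ j : Fin n, A i j • (Matrix.single j i (1:ℝ)) = Aᵀ := by
    rw [Finset.sum_comm]
    conv_rhs => rw [Matrix.matrix_eq_sum_single Aᵀ]
    simp [Matrix.smul_single, Matrix.transpose_apply]
  simp only [eSo, smul_sub, Finset.sum_sub_distrib, h1, h2, hA]
  module

def sigSet (n : ℕ) : Fin 4 → Set (Fin n × Fin n)
  | 0 => {p | 2 ≤ (p.1:ℕ) ∧ 2 ≤ (p.2:ℕ)}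
  | 1 => {p | (p.1:ℕ) < 2 ∧ (p.2:ℕ) < 2}
  | 2 => {p | ((p.1:ℕ) = 0 ∧ 2 ≤ (p.2:ℕ)) ∨ (2 ≤ (p.1:ℕ) ∧ (p.2:ℕ) = 0)}
  | 3 => {p | ((p.1:ℕ) = 1 ∧ 2 ≤ (p.2:ℕ)) ∨ (2 ≤ (p.1:ℕ) ∧ (p.2:ℕ) = 1)}

lemma aux_sig_disj {n : ℕ} : ∀ i j : Fin 4, i ≠ j → ∀ p, p ∈ sigSet n i → p ∈ sigSet n j → False := by
  intro i j hij p hpi hpj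
  fin_cases i <;> fin_cases j <;>
    simp only [sigSet, Set.mem_setOf_eq, ne_eq, not_true_eq_false] at hpi hpj hij <;> omega

end Aux

set_option maxHeartbeats 1000000 in
theorem stmt18 (n : ℕ) (hn : 4 ≤ n) :
    let i0 : Fin n := ⟨0, by omega⟩
    let i1 : Fin n := ⟨1, by omega⟩
    let k : Submodule ℝ (Matrix (Fin n) (Fin n) ℝ) :=
      Submodule.span ℝ {A | ∃ i j : Fin n, 2 ≤ (i : ℕ) ∧ (i : ℕ) < (j : ℕ) ∧ A = eSo n i j}
    let m1 : Submodule ℝ (Matrix (Fin n) (Fin n) ℝ) := Submodule.span ℝ {eSo n i0 i1}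
    let m2 : Submodule ℝ (Matrix (Fin n) (Fin n) ℝ) :=
      Submodule.span ℝ {A | ∃ j : Fin n, 2 ≤ (j : ℕ) ∧ A = eSo n i0 j}
    let m3 : Submodule ℝ (Matrix (Fin n) (Fin n) ℝ) :=
      Submodule.span ℝ {A | ∃ j : Fin n, 2 ≤ (j : ℕ) ∧ A = eSo n i1 j}
    (k ⊔ m1 ⊔ m2 ⊔ m3 = soN n) ∧
    iSupIndep (![k, m1, m2, m3] : Fin 4 → Submodule ℝ (Matrix (Fin n) (Fin n) ℝ)) ∧
    (∀ x ∈ m1, ∀ y ∈ m1, ⁅x, y⁆ = (0 : Matrix (Fin n) (Fin n) ℝ)) ∧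
    (∀ x ∈ m1, ∀ y ∈ m1, ⁅x, y⁆ ∈ k) ∧
    (∀ x ∈ m2, ∀ y ∈ m2, ⁅x, y⁆ ∈ k) ∧
    (∀ x ∈ m3, ∀ y ∈ m3, ⁅x, y⁆ ∈ k) ∧
    (∀ x ∈ m2, ∀ y ∈ m3, ⁅x, y⁆ ∈ k ⊔ m1) ∧
    (∀ x ∈ m1, ∀ y ∈ m2, ⁅x, y⁆ ∈ m3) ∧
    (∀ x ∈ m1, ∀ y ∈ m3, ⁅x, y⁆ ∈ m2) := by
  intro i0 i1 k m1 m2 m3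
  have hi0 : (i0 : ℕ) = 0 := rfl
  have hi1 : (i1 : ℕ) = 1 := rfl
  have hne01 : i0 ≠ i1 := by intro h; have := congrArg Fin.val h; omega
  -- membership of generators in k
  have hkmem : ∀ a b : Fin n, 2 ≤ (a:ℕ) → 2 ≤ (b:ℕ) → eSo n a b ∈ k := by
    intro a b ha hb
    rcases lt_trichotomy ((a:ℕ)) ((b:ℕ)) with h | h | h
    · exact Submodule.subset_span ⟨a, b, ha, h, rfl⟩
    · rw [show a = b from Fin.ext h, aux_eSo_self]; exact k.zero_mem
    · rw [aux_eSo_antisymm]; exact k.neg_mem (Submodule.subset_span ⟨b, a, hb, h, rfl⟩)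
  -- every generator is in the sup
  have hgen : ∀ a b : Fin n, eSo n a b ∈ k ⊔ m1 ⊔ m2 ⊔ m3 := by
    have base : ∀ a b : Fin n, (a:ℕ) < (b:ℕ) → eSo n a b ∈ k ⊔ m1 ⊔ m2 ⊔ m3 := by
      intro a b hab
      by_cases ha2 : 2 ≤ (a:ℕ)
      · exact Submodule.mem_sup_left (Submodule.mem_sup_left (Submodule.mem_sup_left
          (Submodule.subset_span ⟨a, b, ha2, hab, rfl⟩)))
      · by_cases ha0 : (a:ℕ) = 0
        · have haa : a = i0 := Fin.ext (by omega)
          by_cases hb1 : (b:ℕ) = 1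
          · have hbb : b = i1 := Fin.ext (by omega)
            rw [haa, hbb]
            exact Submodule.mem_sup_left (Submodule.mem_sup_left
              (Submodule.mem_sup_right (Submodule.subset_span rfl)))
          · have hb2 : 2 ≤ (b:ℕ) := by omega
            rw [haa]
            exact Submodule.mem_sup_left (Submodule.mem_sup_right
              (Submodule.subset_span ⟨b, hb2, rfl⟩))
        · have ha1 : (a:ℕ) = 1 := by omega
          have hb2 : 2 ≤ (b:ℕ) := by omega
          rw [show a = i1 from Fin.ext (by omega)]
          exact Submodule.mem_sup_right (Submodule.subset_span ⟨b, hb2, rfl⟩)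
    intro a b
    rcases lt_trichotomy ((a:ℕ)) ((b:ℕ)) with h | h | h
    · exact base a b h
    · rw [show a = b from Fin.ext h, aux_eSo_self]; exact Submodule.zero_mem _
    · rw [aux_eSo_antisymm]; exact Submodule.neg_mem _ (base b a h)
  refine ⟨?_, ?_, ?_, ?_, ?_, ?_, ?_, ?_, ?_⟩
  · -- sum
    apply le_antisymm
    · have hso : ∀ a b : Fin n, eSo n a b ∈ soN n := fun a b => aux_eSo_transpose a b
      refine sup_le (sup_le (sup_le ?_ ?_) ?_) ?_ <;> rw [Submodule.span_le]
      · rintro x ⟨a, b, _, _, rfl⟩; exact hso a b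
      · rintro x rfl; exact hso i0 i1
      · rintro x ⟨j, _, rfl⟩; exact hso i0 j
      · rintro x ⟨j, _, rfl⟩; exact hso i1 j
    · intro A hA
      have hAt : Aᵀ = -A := hA
      rw [aux_skew_eq_sum A hAt]
      exact Submodule.smul_mem _ _ (Submodule.sum_mem _ fun i _ =>
        Submodule.sum_mem _ fun j _ => Submodule.smul_mem _ _ (hgen i j))
  · -- independence
    refine (aux_suppM_indep (sigSet n) aux_sig_disj).mono ?_
    intro t
    fin_cases t
    · show k ≤ suppM n (sigSet n 0)
      rw [Submodule.span_le]
      rintro x ⟨a, b, ha, hab, rfl⟩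
      exact aux_eSo_mem_suppM (by simp [sigSet]; omega) (by simp [sigSet]; omega)
    · show m1 ≤ suppM n (sigSet n 1)
      rw [Submodule.span_le]
      rintro x rfl
      exact aux_eSo_mem_suppM (by simp [sigSet, hi0, hi1]) (by simp [sigSet, hi0, hi1])
    · show m2 ≤ suppM n (sigSet n 2)
      rw [Submodule.span_le]
      rintro x ⟨j, hj, rfl⟩
      exact aux_eSo_mem_suppM (by simp [sigSet, hi0]; omega) (by simp [sigSet, hi0]; omega)
    · show m3 ≤ suppM n (sigSet n 3)
      rw [Submodule.span_le]
      rintro x ⟨j, hj, rfl⟩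
      exact aux_eSo_mem_suppM (by simp [sigSet, hi1]; omega) (by simp [sigSet, hi1]; omega)
  · -- [m1,m1] = 0
    intro x hx y hy
    rw [Submodule.mem_span_singleton] at hx hy
    obtain ⟨a, rfl⟩ := hx
    obtain ⟨b, rfl⟩ := hy
    simp [Ring.lie_def, smul_mul_assoc, mul_smul_comm, smul_smul, mul_comm a b]
  · -- [m1,m1] ⊆ k
    intro x hx y hy
    rw [Submodule.mem_span_singleton] at hx hy
    obtain ⟨a, rfl⟩ := hx
    obtain ⟨b, rfl⟩ := hy
    simpa [Ring.lie_def, smul_mul_assoc, mul_smul_comm, smul_smul, mul_comm a b] using k.zero_mem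
  · -- [m2,m2] ⊆ k
    refine aux_span_lie ?_
    rintro x ⟨j, hj, rfl⟩ y ⟨l, hl, rfl⟩
    have h1 : j ≠ i0 := by intro h; rw [h] at hj; omega
    have h2 : i0 ≠ l := by intro h; rw [← h] at hl; omega
    rw [aux_lie_eSo, if_neg h1, if_neg h2, if_pos rfl]
    have : (if j = l then eSo n i0 i0 else 0) = 0 := by
      split_ifs <;> simp [aux_eSo_self]
    rw [this]
    simpa using k.neg_mem (hkmem j l hj hl)
  · -- [m3,m3] ⊆ k
    refine aux_span_lie ?_
    rintro x ⟨j, hj, rfl⟩ y ⟨l, hl, rfl⟩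
    have h1 : j ≠ i1 := by intro h; rw [h] at hj; omega
    have h2 : i1 ≠ l := by intro h; rw [← h] at hl; omega
    rw [aux_lie_eSo, if_neg h1, if_neg h2, if_pos rfl]
    have : (if j = l then eSo n i1 i1 else 0) = 0 := by
      split_ifs <;> simp [aux_eSo_self]
    rw [this]
    simpa using k.neg_mem (hkmem j l hj hl)
  · -- [m2,m3] ⊆ k ⊔ m1
    refine aux_span_lie ?_
    rintro x ⟨j, hj, rfl⟩ y ⟨l, hl, rfl⟩
    have h1 : j ≠ i1 := by intro h; rw [h] at hj; omega
    have h2 : i0 ≠ l := by intro h; rw [← h] at hl; omega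
    rw [aux_lie_eSo, if_neg h1, if_neg h2, if_neg hne01]
    split_ifs with h
    · simpa using Submodule.mem_sup_right (m1.neg_mem (Submodule.subset_span rfl))
    · simpa using Submodule.zero_mem (k ⊔ m1)
  · -- [m1,m2] ⊆ m3
    refine aux_span_lie ?_
    rintro x rfl y ⟨l, hl, rfl⟩
    have h1 : i1 ≠ i0 := fun h => hne01 h.symm
    have h2 : i0 ≠ l := by intro h; rw [← h] at hl; omega
    have h3 : i1 ≠ l := by intro h; rw [← h] at hl; omega
    rw [aux_lie_eSo, if_neg h1, if_neg h2, if_neg h3, if_pos rfl]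
    simpa using m3.neg_mem (Submodule.subset_span ⟨l, hl, rfl⟩)
  · -- [m1,m3] ⊆ m2
    refine aux_span_lie ?_
    rintro x rfl y ⟨l, hl, rfl⟩
    have h2 : i0 ≠ l := by intro h; rw [← h] at hl; omega
    have h3 : i1 ≠ l := by intro h; rw [← h] at hl; omega
    rw [aux_lie_eSo, if_pos rfl, if_neg h2, if_neg h3, if_neg hne01]
    have hm : eSo n i0 l ∈ m2 := Submodule.subset_span ⟨l, hl, rfl⟩
    simpa using hm
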